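/- Fix an integer n ≥ 2, γ₁ > γ₂ > 0, a rate r > 0, and a survival function t ↦ ₜp_x : [0,∞) → (0,1] which is continuous, strictly decreasing, with ₀p_x = 1 and ₜp_x → 0 as t → ∞. Then there exists t₀ > 0 (depending on γ₁, γ₂ and n) such that Δ_{n,γ₁}(t) < Δ_{n,γ₂}(t) for all t ∈ (0, t₀). -/

import Mathlib

open MeasureTheory Real Finset

/-- `theta n γ p = E[(n/N(p))^{1-γ}]` where `N(p)-1 ~ Bin(n-1,p)`. -/
noncomputable def theta (n : ℕ) (γ p : ℝ) : ℝ :=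
  ∑ k ∈ Finset.range n,
    ((n - 1).choose k : ℝ) * p ^ k * (1 - p) ^ (n - 1 - k) *
      ((n : ℝ) / ((k : ℝ) + 1)) ^ (1 - γ)

/-- `beta n γ p = p * theta n γ p`. -/
noncomputable def beta (n : ℕ) (γ p : ℝ) : ℝ := p * theta n γ p

lemma w_sum (n : ℕ) (hn : 1 ≤ n) (q : ℝ) :
    ∑ k ∈ Finset.range n, ((n - 1).choose k : ℝ) * q ^ k * (1 - q) ^ (n - 1 - k) = 1 := by
  obtain ⟨m, rfl⟩ : ∃ m, n = m + 1 := ⟨n - 1, (Nat.succ_pred_eq_of_pos hn).symm⟩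
  have h := add_pow q (1 - q) m
  simp only [Nat.add_sub_cancel] at *
  rw [show q + (1 - q) = 1 by ring, one_pow] at h
  rw [Finset.sum_congr rfl fun k (hk : k ∈ Finset.range (m+1)) =>
    (by ring : ((m.choose k : ℝ)) * q ^ k * (1 - q) ^ (m - k)
      = q ^ k * (1 - q) ^ (m - k) * (m.choose k : ℝ)), ← h]

lemma key_identity (n : ℕ) (hn : 1 ≤ n) (q : ℝ) :
    q * ∑ k ∈ Finset.range n, ((n - 1).choose k : ℝ) * q ^ k * (1 - q) ^ (n - 1 - k) *
      ((n : ℝ) / ((k : ℝ) + 1)) = 1 - (1 - q) ^ n := by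
  obtain ⟨m, rfl⟩ : ∃ m, n = m + 1 := ⟨n - 1, (Nat.succ_pred_eq_of_pos hn).symm⟩
  have h := add_pow q (1 - q) (m + 1)
  rw [show q + (1 - q) = 1 by ring, one_pow] at h
  rw [Finset.sum_range_succ'] at h
  simp only [Nat.add_sub_cancel, pow_zero, Nat.choose_zero_right, Nat.cast_one, one_mul,
    Nat.sub_zero] at h ⊢
  rw [Finset.mul_sum]
  have : ∀ k ∈ Finset.range (m + 1),
      q * ((m.choose k : ℝ) * q ^ k * (1 - q) ^ (m - k) * ((m + 1 : ℕ) / ((k : ℝ) + 1)))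
      = q ^ (k + 1) * (1 - q) ^ (m + 1 - (k + 1)) * ((m + 1).choose (k + 1) : ℝ) := by
    intro k hk
    have hch : (m + 1 : ℕ) * m.choose k = (m + 1).choose (k + 1) * (k + 1) :=
      Nat.add_one_mul_choose_eq m k
    have hch' : ((m : ℝ) + 1) * (m.choose k : ℝ) = ((m + 1).choose (k + 1) : ℝ) * ((k : ℝ) + 1) := by
      exact_mod_cast congrArg (Nat.cast : ℕ → ℝ) hch
    have hk1 : ((k : ℝ) + 1) ≠ 0 := by positivity
    have : (m + 1 - (k + 1)) = m - k := by omega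
    rw [this]
    push_cast
    field_simp
    linear_combination (q ^ (k + 1) * (1 - q) ^ (m - k)) * hch'
  rw [Finset.sum_congr rfl this]
  linarith [h]

lemma w_nonneg (n : ℕ) {q : ℝ} (hq0 : 0 ≤ q) (hq1 : q ≤ 1) (k : ℕ) :
    0 ≤ ((n - 1).choose k : ℝ) * q ^ k * (1 - q) ^ (n - 1 - k) := by
  have h1 : (0:ℝ) ≤ 1 - q := by linarith
  positivity

lemma c_pos (n : ℕ) (hn : 1 ≤ n) (k : ℕ) : 0 < (n : ℝ) / ((k : ℝ) + 1) := by
  have : (0:ℝ) < n := by exact_mod_cast hn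
  positivity

lemma theta_pos (n : ℕ) (hn : 1 ≤ n) (γ : ℝ) {q : ℝ} (hq0 : 0 < q) (hq1 : q ≤ 1) :
    0 < theta n γ q := by
  unfold theta
  apply Finset.sum_pos'
  · intro k hk
    exact mul_nonneg (w_nonneg n hq0.le hq1 k) (Real.rpow_nonneg (c_pos n hn k).le _)
  · refine ⟨n - 1, Finset.mem_range.2 (by omega), ?_⟩
    have h1 : (n - 1 - (n - 1)) = 0 := by omega
    rw [h1, Nat.choose_self, pow_zero]
    have : (0:ℝ) < ((n - 1).choose (n-1) : ℝ) := by rw [Nat.choose_self]; norm_num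
    apply mul_pos
    · push_cast; positivity
    · exact Real.rpow_pos_of_pos (c_pos n hn _) _

lemma theta_one (n : ℕ) (hn : 1 ≤ n) (γ : ℝ) : theta n γ 1 = 1 := by
  unfold theta
  rw [Finset.sum_eq_single (n - 1)]
  · have h1 : (n - 1 - (n - 1)) = 0 := by omega
    have hn' : ((n:ℝ)) ≠ 0 := by positivity
    have : ((n - 1:ℕ):ℝ) + 1 = (n:ℝ) := by
      have : ((n - 1 : ℕ) : ℝ) = (n:ℝ) - 1 := by
        have : (1:ℕ) ≤ n := hn
        push_cast [Nat.cast_sub this]; ring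
      rw [this]; ring
    rw [h1, Nat.choose_self, this, div_self hn', Real.one_rpow]
    norm_num
  · intro k hk hne
    have hlt : k < n := Finset.mem_range.1 hk
    have : (1:ℝ) - 1 = 0 := by ring
    rw [this, zero_pow (by omega : n - 1 - k ≠ 0)]
    ring
  · intro h
    exact absurd (Finset.mem_range.2 (by omega : n - 1 < n)) h

lemma beta_one (n : ℕ) (hn : 1 ≤ n) (γ : ℝ) : beta n γ 1 = 1 := by
  rw [beta, theta_one n hn, mul_one]

lemma beta_pos (n : ℕ) (hn : 1 ≤ n) (γ : ℝ) {q : ℝ} (hq0 : 0 < q) (hq1 : q ≤ 1) :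
    0 < beta n γ q := mul_pos hq0 (theta_pos n hn γ hq0 hq1)

lemma theta_le (n : ℕ) (hn : 1 ≤ n) {γ : ℝ} (hγ : 0 < γ) {q : ℝ} (hq0 : 0 ≤ q) (hq1 : q ≤ 1) :
    theta n γ q ≤ n := by
  have hn1 : (1:ℝ) ≤ n := by exact_mod_cast hn
  have hterm : ∀ k ∈ Finset.range n,
      ((n - 1).choose k : ℝ) * q ^ k * (1 - q) ^ (n - 1 - k) * ((n : ℝ) / ((k : ℝ) + 1)) ^ (1 - γ)
      ≤ ((n - 1).choose k : ℝ) * q ^ k * (1 - q) ^ (n - 1 - k) * n := by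
    intro k hk
    refine mul_le_mul_of_nonneg_left ?_ (w_nonneg n hq0 hq1 k)
    have hc0 : (0:ℝ) < (n : ℝ) / ((k : ℝ) + 1) := c_pos n hn k
    have hc1 : (n : ℝ) / ((k : ℝ) + 1) ≤ n := by
      rw [div_le_iff₀ (by positivity)]
      nlinarith [Nat.cast_nonneg (α := ℝ) k]
    have hcge1 : (1:ℝ) ≤ (n : ℝ) / ((k : ℝ) + 1) := by
      rw [le_div_iff₀ (by positivity)]
      have : k + 1 ≤ n := Finset.mem_range.1 hk
      have : ((k:ℝ) + 1) ≤ n := by exact_mod_cast this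
      linarith
    rcases le_or_gt (1 - γ) 0 with h | h
    · calc ((n : ℝ) / ((k : ℝ) + 1)) ^ (1 - γ) ≤ 1 :=
            Real.rpow_le_one_of_one_le_of_nonpos hcge1 h
          _ ≤ n := hn1
    · calc ((n : ℝ) / ((k : ℝ) + 1)) ^ (1 - γ) ≤ (n:ℝ) ^ (1 - γ) :=
            Real.rpow_le_rpow hc0.le hc1 h.le
          _ ≤ (n:ℝ) ^ (1:ℝ) := Real.rpow_le_rpow_of_exponent_le hn1 (by linarith)
          _ = n := Real.rpow_one _
  calc theta n γ q ≤ ∑ k ∈ Finset.range n,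
        ((n - 1).choose k : ℝ) * q ^ k * (1 - q) ^ (n - 1 - k) * n :=
        Finset.sum_le_sum hterm
    _ = (∑ k ∈ Finset.range n, ((n - 1).choose k : ℝ) * q ^ k * (1 - q) ^ (n - 1 - k)) * n := by
        rw [Finset.sum_mul]
    _ = n := by rw [w_sum n hn, one_mul]

lemma beta_le (n : ℕ) (hn : 1 ≤ n) {γ : ℝ} (hγ : 0 < γ) {q : ℝ} (hq0 : 0 ≤ q) (hq1 : q ≤ 1) :
    beta n γ q ≤ n := by
  have hth := theta_le n hn hγ hq0 hq1
  have hθ0 : 0 ≤ theta n γ q := by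
    unfold theta
    exact Finset.sum_nonneg fun k hk =>
      mul_nonneg (w_nonneg n hq0 hq1 k) (Real.rpow_nonneg (c_pos n hn k).le _)
  rw [beta]
  calc q * theta n γ q ≤ 1 * theta n γ q := mul_le_mul_of_nonneg_right hq1 hθ0
    _ = theta n γ q := one_mul _
    _ ≤ n := hth

lemma beta_rpow_strict (n : ℕ) (hn : 1 ≤ n) {γ₁ γ₂ : ℝ} (hγ₂ : 0 < γ₂) (hγ : γ₂ < γ₁)
    {q : ℝ} (hq0 : 0 < q) (hq1 : q < 1) :
    beta n γ₂ q ^ (1/γ₂) < beta n γ₁ q ^ (1/γ₁) := by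
  have hγ₁ : 0 < γ₁ := hγ₂.trans hγ
  set lam := (γ₁ - γ₂)/γ₁ with hlam
  have hlam0 : 0 < lam := div_pos (by linarith) hγ₁
  have hlam1 : lam < 1 := by rw [hlam, div_lt_one hγ₁]; linarith
  have hlamsum : lam + (1 - lam) = 1 := by ring
  set w : ℕ → ℝ := fun k => ((n - 1).choose k : ℝ) * q ^ k * (1 - q) ^ (n - 1 - k) with hw
  set c : ℕ → ℝ := fun k => (n : ℝ) / ((k : ℝ) + 1) with hc
  have hwpos : ∀ k ∈ Finset.range n, 0 < w k := by
    intro k hk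
    have hk' : k ≤ n - 1 := by have := Finset.mem_range.1 hk; omega
    have : 0 < ((n - 1).choose k : ℝ) := by
      exact_mod_cast Nat.choose_pos hk'
    have h1q : (0:ℝ) < 1 - q := by linarith
    simp only [hw]
    positivity
  have hcpos : ∀ k, 0 < c k := fun k => c_pos n hn k
  have htheta : ∀ γ', theta n γ' q = ∑ k ∈ Finset.range n, w k * c k ^ (1 - γ') := by
    intro γ'; unfold theta; rfl
  have hT0 : 0 < ∑ k ∈ Finset.range n, w k * c k := by
    apply Finset.sum_pos
    · intro k hk; exact mul_pos (hwpos k hk) (hcpos k)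
    · exact ⟨0, Finset.mem_range.2 (by omega)⟩
  set T := ∑ k ∈ Finset.range n, w k * c k with hTdef
  -- Hölder
  have hconj : Real.HolderConjugate (1/lam) (1/(1-lam)) := by
    rw [Real.holderConjugate_iff]
    constructor
    · rw [lt_div_iff₀ hlam0]; linarith
    · rw [one_div, inv_inv, one_div, inv_inv]; ring
  set f : ℕ → ℝ := fun k => (w k * c k) ^ lam with hf
  set g : ℕ → ℝ := fun k => (w k * c k ^ (1 - γ₁)) ^ (1 - lam) with hg
  have hH := Real.inner_le_Lp_mul_Lq (Finset.range n) f g hconj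
  have hfg : ∀ k ∈ Finset.range n, f k * g k = w k * c k ^ (1 - γ₂) := by
    intro k hk
    have hwk := hwpos k hk
    have hck := hcpos k
    rw [hf, hg]
    simp only []
    rw [Real.mul_rpow hwk.le hck.le, Real.mul_rpow hwk.le (Real.rpow_nonneg hck.le _),
      ← Real.rpow_mul hck.le]
    rw [show w k ^ lam * c k ^ lam * (w k ^ (1 - lam) * c k ^ ((1 - γ₁) * (1 - lam)))
        = (w k ^ lam * w k ^ (1 - lam)) * (c k ^ lam * c k ^ ((1 - γ₁) * (1 - lam))) by ring,
      ← Real.rpow_add hwk, ← Real.rpow_add hck, hlamsum, Real.rpow_one]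
    congr 2
    rw [hlam]
    field_simp
    ring
  have hFsum : ∑ k ∈ Finset.range n, |f k| ^ (1/lam) = T := by
    rw [hTdef]
    apply Finset.sum_congr rfl
    intro k hk
    have hwc : 0 ≤ w k * c k := mul_nonneg (hwpos k hk).le (hcpos k).le
    rw [hf]
    simp only []
    rw [abs_of_nonneg (Real.rpow_nonneg hwc _), ← Real.rpow_mul hwc, mul_one_div,
      div_self hlam0.ne', Real.rpow_one]
  have hGsum : ∑ k ∈ Finset.range n, |g k| ^ (1/(1-lam)) = theta n γ₁ q := by
    rw [htheta γ₁]
    apply Finset.sum_congr rfl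
    intro k hk
    have hwc : 0 ≤ w k * c k ^ (1 - γ₁) :=
      mul_nonneg (hwpos k hk).le (Real.rpow_nonneg (hcpos k).le _)
    rw [hg]
    simp only []
    rw [abs_of_nonneg (Real.rpow_nonneg hwc _), ← Real.rpow_mul hwc, mul_one_div,
      div_self (by linarith : (1:ℝ) - lam ≠ 0), Real.rpow_one]
  rw [hFsum, hGsum, one_div_one_div, one_div_one_div] at hH
  have hth1pos : 0 < theta n γ₁ q := theta_pos n hn γ₁ hq0 hq1.le
  have key : theta n γ₂ q ≤ T ^ lam * theta n γ₁ q ^ (1 - lam) := by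
    rw [htheta γ₂, ← Finset.sum_congr rfl hfg]
    exact hH
  -- combine with the identity q * T = 1 - (1-q)^n
  have hqT : q * T = 1 - (1 - q) ^ n := by
    rw [hTdef]
    exact key_identity n hn q
  have h1q : (0:ℝ) < 1 - q := by linarith
  have hqT1 : q * T < 1 := by
    rw [hqT]
    have : 0 < (1 - q) ^ n := pow_pos h1q n
    linarith
  have hqTpos : 0 < q * T := mul_pos hq0 hT0
  -- beta inequality
  have h3 : beta n γ₂ q ≤ (q * T) ^ lam * (beta n γ₁ q) ^ (1 - lam) := by
    rw [beta, beta, Real.mul_rpow hq0.le hT0.le, Real.mul_rpow hq0.le hth1pos.le]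
    calc q * theta n γ₂ q ≤ q * (T ^ lam * theta n γ₁ q ^ (1 - lam)) :=
          mul_le_mul_of_nonneg_left key hq0.le
      _ = (q ^ lam * q ^ (1 - lam)) * (T ^ lam * theta n γ₁ q ^ (1 - lam)) := by
          rw [← Real.rpow_add hq0, hlamsum, Real.rpow_one]
      _ = q ^ lam * T ^ lam * (q ^ (1 - lam) * theta n γ₁ q ^ (1 - lam)) := by ring
  have hb2pos : 0 < beta n γ₂ q := beta_pos n hn γ₂ hq0 hq1.le
  have hb1pos : 0 < beta n γ₁ q := beta_pos n hn γ₁ hq0 hq1.le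
  have h4 : beta n γ₂ q ^ (1/γ₂) ≤ ((q * T) ^ lam * (beta n γ₁ q) ^ (1 - lam)) ^ (1/γ₂) :=
    Real.rpow_le_rpow hb2pos.le h3 (by positivity)
  have h5 : ((q * T) ^ lam * (beta n γ₁ q) ^ (1 - lam)) ^ (1/γ₂)
      = (q * T) ^ (lam * (1/γ₂)) * (beta n γ₁ q) ^ (1/γ₁) := by
    rw [Real.mul_rpow (Real.rpow_nonneg hqTpos.le _) (Real.rpow_nonneg hb1pos.le _),
      ← Real.rpow_mul hqTpos.le, ← Real.rpow_mul hb1pos.le]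
    congr 1
    rw [hlam]
    congr 1
    field_simp
    ring
  have h6 : (q * T) ^ (lam * (1/γ₂)) < 1 :=
    Real.rpow_lt_one hqTpos.le hqT1 (by positivity)
  have h7 : 0 < (beta n γ₁ q) ^ (1/γ₁) := Real.rpow_pos_of_pos hb1pos _
  calc beta n γ₂ q ^ (1/γ₂) ≤ (q * T) ^ (lam * (1/γ₂)) * (beta n γ₁ q) ^ (1/γ₁) := by
        rw [← h5]; exact h4
    _ < 1 * (beta n γ₁ q) ^ (1/γ₁) := mul_lt_mul_of_pos_right h6 h7
    _ = (beta n γ₁ q) ^ (1/γ₁) := one_mul _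

/-- Optimal tontine payout function. -/
noncomputable def Dopt (n : ℕ) (γ r : ℝ) (p : ℝ → ℝ) (t : ℝ) : ℝ :=
  beta n γ (p t) ^ (1 / γ) /
    ∫ s in Set.Ioi (0 : ℝ), Real.exp (-r * s) * beta n γ (p s) ^ (1 / γ)

/-- Cumulative discounted payout of the optimal tontine. -/
noncomputable def Delta (n : ℕ) (γ r : ℝ) (p : ℝ → ℝ) (t : ℝ) : ℝ :=
  ∫ s in (0 : ℝ)..t, Real.exp (-r * s) * Dopt n γ r p s

noncomputable def Ffun (n : ℕ) (γ r : ℝ) (p : ℝ → ℝ) (s : ℝ) : ℝ :=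
  Real.exp (-r * s) * beta n γ (p s) ^ (1 / γ)

noncomputable def Iint (n : ℕ) (γ r : ℝ) (p : ℝ → ℝ) : ℝ :=
  ∫ s in Set.Ioi (0 : ℝ), Ffun n γ r p s

lemma Dopt_eq (n : ℕ) (γ r : ℝ) (p : ℝ → ℝ) (t : ℝ) :
    Dopt n γ r p t = beta n γ (p t) ^ (1 / γ) / Iint n γ r p := rfl

lemma beta_continuous (n : ℕ) (γ : ℝ) : Continuous fun q : ℝ => beta n γ q := by
  unfold beta theta
  continuity

section Analytic

variable {n : ℕ} {γ r : ℝ} {p : ℝ → ℝ}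

lemma Ffun_contOn (hn : 1 ≤ n) (hγ : 0 < γ) (hr : 0 < r) (hcont : Continuous p)
    (hmem : ∀ t, 0 ≤ t → p t ∈ Set.Ioc (0 : ℝ) 1) :
    ContinuousOn (Ffun n γ r p) (Set.Ici 0) := by
  intro s hs
  apply ContinuousAt.continuousWithinAt
  apply ContinuousAt.mul (by fun_prop)
  exact (((beta_continuous n γ).comp hcont).continuousAt).rpow_const
    (Or.inl (beta_pos n hn γ (hmem s hs).1 (hmem s hs).2).ne')

lemma Ffun_pos (hn : 1 ≤ n) (hγ : 0 < γ) {s : ℝ} (hs : 0 ≤ s)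
    (hmem : ∀ t, 0 ≤ t → p t ∈ Set.Ioc (0 : ℝ) 1) : 0 < Ffun n γ r p s :=
  mul_pos (Real.exp_pos _)
    (Real.rpow_pos_of_pos (beta_pos n hn γ (hmem s hs).1 (hmem s hs).2) _)

lemma Ffun_int (hn : 1 ≤ n) (hγ : 0 < γ) (hr : 0 < r) (hcont : Continuous p)
    (hmem : ∀ t, 0 ≤ t → p t ∈ Set.Ioc (0 : ℝ) 1) :
    IntegrableOn (Ffun n γ r p) (Set.Ioi 0) := by
  apply Integrable.mono' (g := fun s => (n : ℝ) ^ ((1:ℝ)/γ) * Real.exp (-r * s))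
  · exact (exp_neg_integrableOn_Ioi 0 hr).const_mul _
  · exact ((Ffun_contOn hn hγ hr hcont hmem).mono Set.Ioi_subset_Ici_self).aestronglyMeasurable
      measurableSet_Ioi
  · rw [ae_restrict_iff' measurableSet_Ioi]
    filter_upwards with s hs
    have h0 : (0:ℝ) ≤ s := (Set.mem_Ioi.1 hs).le
    have hb0 : 0 < beta n γ (p s) := beta_pos n hn γ (hmem s h0).1 (hmem s h0).2
    have hble : beta n γ (p s) ≤ n := beta_le n hn hγ (hmem s h0).1.le (hmem s h0).2
    rw [Real.norm_eq_abs, abs_of_nonneg (Ffun_pos hn hγ h0 hmem).le]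
    unfold Ffun
    calc Real.exp (-r * s) * beta n γ (p s) ^ (1/γ)
        ≤ Real.exp (-r * s) * (n : ℝ) ^ ((1:ℝ)/γ) :=
          mul_le_mul_of_nonneg_left (Real.rpow_le_rpow hb0.le hble (by positivity))
            (Real.exp_pos _).le
      _ = (n : ℝ) ^ ((1:ℝ)/γ) * Real.exp (-r * s) := mul_comm _ _

lemma Iint_pos (hn : 1 ≤ n) (hγ : 0 < γ) (hr : 0 < r) (hcont : Continuous p)
    (hmem : ∀ t, 0 ≤ t → p t ∈ Set.Ioc (0 : ℝ) 1) :
    0 < Iint n γ r p := by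
  rw [Iint, setIntegral_pos_iff_support_of_nonneg_ae ?_ (Ffun_int hn hγ hr hcont hmem)]
  · refine lt_of_lt_of_le ?_ (measure_mono (Set.subset_inter (fun s hs => ?_) Set.Subset.rfl))
    · rw [Real.volume_Ioi]; simp
    · exact (Ffun_pos hn hγ (Set.mem_Ioi.1 hs).le hmem).ne'
  · filter_upwards [ae_restrict_mem measurableSet_Ioi] with s hs
    exact (Ffun_pos hn hγ (Set.mem_Ioi.1 hs).le hmem).le

end Analytic

/-- for `γ₁ > γ₂ > 0` there is an initial period `(0, t₀)` on which
`Δ_{n,γ₁}(t) < Δ_{n,γ₂}(t)`. -/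
theorem depletion_initial_period
    (n : ℕ) (hn : 2 ≤ n) (γ₁ γ₂ : ℝ) (hγ₂ : 0 < γ₂) (hγ : γ₂ < γ₁)
    (r : ℝ) (hr : 0 < r)
    (p : ℝ → ℝ) (hcont : Continuous p) (hanti : StrictAntiOn p (Set.Ici 0))
    (hmem : ∀ t, 0 ≤ t → p t ∈ Set.Ioc (0 : ℝ) 1) (hp0 : p 0 = 1)
    (hlim : Filter.Tendsto p Filter.atTop (nhds 0)) :
    ∃ t₀ > 0, ∀ t ∈ Set.Ioo (0 : ℝ) t₀, Delta n γ₁ r p t < Delta n γ₂ r p t := by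
  have hn1 : 1 ≤ n := by omega
  have hγ₁ : 0 < γ₁ := hγ₂.trans hγ
  have hpslt : ∀ s, 0 < s → p s < 1 := by
    intro s hs
    have := hanti (Set.mem_Ici.2 le_rfl) (Set.mem_Ici.2 hs.le) hs
    rwa [hp0] at this
  have hint1 := Ffun_int hn1 hγ₁ hr hcont hmem
  have hint2 := Ffun_int hn1 hγ₂ hr hcont hmem
  have hI2pos := Iint_pos hn1 hγ₂ hr hcont hmem
  have hI1pos := Iint_pos hn1 hγ₁ hr hcont hmem
  have hIlt : Iint n γ₂ r p < Iint n γ₁ r p := by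
    have hptlt : ∀ s ∈ Set.Ioi (0:ℝ), Ffun n γ₂ r p s < Ffun n γ₁ r p s := by
      intro s hs
      have h0 : (0:ℝ) ≤ s := (Set.mem_Ioi.1 hs).le
      unfold Ffun
      exact mul_lt_mul_of_pos_left
        (beta_rpow_strict n hn1 hγ₂ hγ (hmem s h0).1 (hpslt s hs)) (Real.exp_pos _)
    have hdiff : 0 < ∫ s in Set.Ioi (0:ℝ), (Ffun n γ₁ r p s - Ffun n γ₂ r p s) := by
      refine (setIntegral_pos_iff_support_of_nonneg_ae
        (f := fun s => Ffun n γ₁ r p s - Ffun n γ₂ r p s) ?_ (hint1.sub hint2)).2 ?_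
      · filter_upwards [ae_restrict_mem measurableSet_Ioi] with s hs
        exact sub_nonneg.2 (hptlt s hs).le
      · refine lt_of_lt_of_le ?_ (measure_mono (Set.subset_inter (fun s hs => ?_) Set.Subset.rfl))
        · rw [Real.volume_Ioi]; simp
        · exact sub_ne_zero.2 (hptlt s hs).ne'
    rwa [integral_sub hint1 hint2, sub_pos] at hdiff
  have hD0 : Dopt n γ₁ r p 0 < Dopt n γ₂ r p 0 := by
    rw [Dopt_eq, Dopt_eq, hp0, beta_one n hn1, beta_one n hn1, Real.one_rpow, Real.one_rpow]
    exact one_div_lt_one_div_of_lt hI2pos hIlt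
  have hDcont : ∀ γ', 0 < γ' →
      ContinuousOn (fun s => Real.exp (-r*s) * Dopt n γ' r p s) (Set.Ici 0) := by
    intro γ' hγ'
    have heq : (fun s => Real.exp (-r*s) * Dopt n γ' r p s)
        = fun s => Ffun n γ' r p s / Iint n γ' r p := by
      funext s; rw [Dopt_eq]; unfold Ffun; ring
    rw [heq]
    exact (Ffun_contOn hn1 hγ' hr hcont hmem).div_const _
  set h : ℝ → ℝ := fun s =>
    Real.exp (-r*s) * Dopt n γ₁ r p s - Real.exp (-r*s) * Dopt n γ₂ r p s with hh
  have hhcont : ContinuousOn h (Set.Ici 0) := (hDcont γ₁ hγ₁).sub (hDcont γ₂ hγ₂)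
  have hh0 : h 0 < 0 := by
    rw [hh]
    simp only [mul_zero, Real.exp_zero, one_mul]
    linarith
  have hcw : ContinuousWithinAt h (Set.Ici 0) 0 := hhcont 0 (Set.mem_Ici.2 le_rfl)
  have hmemnhds : h ⁻¹' Set.Iio 0 ∈ nhdsWithin 0 (Set.Ici 0) := hcw (Iio_mem_nhds hh0)
  replace hmemnhds := mem_nhdsGE_iff_exists_Ico_subset.1 hmemnhds
  obtain ⟨t₀, ht₀, hsub⟩ := hmemnhds
  refine ⟨t₀, Set.mem_Ioi.1 ht₀, ?_⟩
  intro t ht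
  obtain ⟨ht0, htt0⟩ := ht
  have hIcc : Set.uIcc (0:ℝ) t = Set.Icc 0 t := Set.uIcc_of_le ht0.le
  have hInt1 : IntervalIntegrable (fun s => Real.exp (-r*s) * Dopt n γ₁ r p s) volume 0 t := by
    apply ContinuousOn.intervalIntegrable
    rw [hIcc]
    exact (hDcont γ₁ hγ₁).mono fun s hs => hs.1
  have hInt2 : IntervalIntegrable (fun s => Real.exp (-r*s) * Dopt n γ₂ r p s) volume 0 t := by
    apply ContinuousOn.intervalIntegrable
    rw [hIcc]
    exact (hDcont γ₂ hγ₂).mono fun s hs => hs.1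
  have hneg : ∫ s in (0:ℝ)..t, h s < 0 := by
    have hpos : 0 < ∫ s in (0:ℝ)..t, -h s := by
      apply intervalIntegral.intervalIntegral_pos_of_pos_on
      · exact ((hInt1.sub hInt2)).neg
      · intro s hs
        have hmem' : s ∈ Set.Ico 0 t₀ := ⟨hs.1.le, hs.2.trans htt0⟩
        have := hsub hmem'
        simp only [Set.mem_preimage, Set.mem_Iio] at this
        exact neg_pos.2 this
      · exact ht0
    rw [intervalIntegral.integral_neg] at hpos
    linarith
  have hdelta : Delta n γ₁ r p t - Delta n γ₂ r p t = ∫ s in (0:ℝ)..t, h s := by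
    rw [Delta, Delta, ← intervalIntegral.integral_sub hInt1 hInt2]
  linarith [hdelta ▸ hneg]
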